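/- In a temporal graph, any infection chain resulting from a single seed infection is contained in a single δ-edge connected component: if an infection starting from one seed infection passes through two edges e and e', then e and e' lie in the same δ-edge connected component. -/

import Mathlib

/-- A temporal graph: an undirected loopless graph together with a time label on each edge. -/
structure TemporalGraph (V : Type) where
  Adj : V → V → Prop
  symm : ∀ u v, Adj u v → Adj v u
  loopless : ∀ v, ¬ Adj v v
  label : V → V → ℕ
  label_symm : ∀ u v, label u v = label v u

namespace TemporalGraph

variable {V : Type}

/-- Node `u` is recorded as infected at time `t` in the log `L`
(seed infections are recorded as `(u,u,t)`). -/
def InfTime (L : Set (V × V × ℕ)) (u : V) (t : ℕ) : Prop :=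
  ∃ v, (v, u, t) ∈ L

/-- Node `v` is infectious at time `t` according to log `L`, for infectious period `δ`:
it became infected at some `t'` with `t' < t ≤ t' + δ`. -/
def Infectious (δ : ℕ) (L : Set (V × V × ℕ)) (v : V) (t : ℕ) : Prop :=
  ∃ t', InfTime L v t' ∧ t' < t ∧ t ≤ t' + δ

/-- `L` is an infection log of the SIR process on `G` (infectious period `δ`)
consistent with the seed infection set `S`. -/
def ConsistentLog (G : TemporalGraph V) (δ : ℕ) (S : Set (V × ℕ))
    (L : Set (V × V × ℕ)) : Prop :=
  -- seed infections are exactly the entries `(u,u,t)`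
  (∀ u t, (u, u, t) ∈ L ↔ (u, t) ∈ S) ∧
  -- each node is infected at most once (SIR: recovered nodes are resistant)
  (∀ u t t', InfTime L u t → InfTime L u t' → t = t') ∧
  -- a node is infected by exactly one neighbor
  (∀ v v' u t, (v, u, t) ∈ L → (v', u, t) ∈ L → v = v') ∧
  -- every non-seed infection travels along an edge at its label time,
  -- from a node that is infectious at that time
  (∀ v u t, (v, u, t) ∈ L → v ≠ u →
      G.Adj v u ∧ G.label v u = t ∧ Infectious δ L v t) ∧
  -- maximality: a susceptible node with an infectious neighbor across an
  -- edge whose label is the current time must become infected now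
  (∀ v u, G.Adj v u → Infectious δ L v (G.label v u) →
      (∀ t', InfTime L u t' → G.label v u ≤ t') → InfTime L u (G.label v u))

/-- The infection timetable induced by a log: which node got infected when. -/
def Timetable (L : Set (V × V × ℕ)) : Set (V × ℕ) :=
  {p | InfTime L p.1 p.2}

end TemporalGraph

namespace TemporalGraph

/-- Two (oriented) edges are directly δ-related: both are edges, they share an
endpoint, and their labels differ by at most δ. -/
def EdgeRel {V : Type} (G : TemporalGraph V) (δ : ℕ) (p q : V × V) : Prop :=
  G.Adj p.1 p.2 ∧ G.Adj q.1 q.2 ∧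
    (p.1 = q.1 ∨ p.1 = q.2 ∨ p.2 = q.1 ∨ p.2 = q.2) ∧
    G.label p.1 p.2 ≤ G.label q.1 q.2 + δ ∧ G.label q.1 q.2 ≤ G.label p.1 p.2 + δ

/-- Two edges lie in the same δ-edge connected component: they are related by the
reflexive-transitive closure of the direct δ-relation. -/
def SameComponent {V : Type} (G : TemporalGraph V) (δ : ℕ) (p q : V × V) : Prop :=
  Relation.ReflTransGen (G.EdgeRel δ) p q

end TemporalGraph


open TemporalGraph in
private lemma edgeRel_symm {V : Type} (G : TemporalGraph V) (δ : ℕ) :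
    Symmetric (G.EdgeRel δ) := by
  rintro p q ⟨h1, h2, h3, h4, h5⟩
  exact ⟨h2, h1, by tauto, h5, h4⟩

open TemporalGraph in
/-- Every non-seed infection edge connects back to an edge out of the seed. -/
private lemma to_seed_edge {V : Type} (G : TemporalGraph V) (δ : ℕ)
    (s : V) (t₀ : ℕ) (L : Set (V × V × ℕ)) (hL : G.ConsistentLog δ {(s, t₀)} L) :
    ∀ t v u, (v, u, t) ∈ L → v ≠ u →
      ∃ w τ, s ≠ w ∧ (s, w, τ) ∈ L ∧ G.SameComponent δ (v, u) (s, w) := by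
  obtain ⟨hseed, huniq, hone, hedge, hmax⟩ := hL
  intro t
  induction t using Nat.strong_induction_on with
  | _ t ih =>
    intro v u hvu hne
    obtain ⟨hadj, hlab, t₁, hinf, hlt, hle⟩ := hedge v u t hvu hne
    obtain ⟨w, hw⟩ := hinf
    by_cases hwv : w = v
    · have hw' : (v, v, t₁) ∈ L := hwv ▸ hw
      have : (v, t₁) ∈ ({(s, t₀)} : Set (V × ℕ)) := (hseed v t₁).mp hw'
      have hv : v = s := by simpa using congrArg Prod.fst this
      subst hv
      exact ⟨u, t, hne, hvu, Relation.ReflTransGen.refl⟩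
    · obtain ⟨x, τ, hxs, hxL, hchain⟩ := ih t₁ hlt w v hw (fun h => hwv h)
      have hadj2 : G.Adj w v ∧ G.label w v = t₁ ∧ _ :=
        hedge w v t₁ hw (fun h => hwv h)
      refine ⟨x, τ, hxs, hxL, Relation.ReflTransGen.head ?_ hchain⟩
      refine ⟨hadj, hadj2.1, by simp, ?_, ?_⟩ <;>
        simp only [hlab, hadj2.2.1] <;> omega

open TemporalGraph in
/-- Edges out of the seed have labels in `(t₀, t₀+δ]`. -/
private lemma seed_edge_label {V : Type} (G : TemporalGraph V) (δ : ℕ)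
    (s : V) (t₀ : ℕ) (L : Set (V × V × ℕ)) (hL : G.ConsistentLog δ {(s, t₀)} L)
    (w : V) (τ : ℕ) (hsw : s ≠ w) (hwL : (s, w, τ) ∈ L) :
    G.label s w = τ ∧ t₀ < τ ∧ τ ≤ t₀ + δ := by
  obtain ⟨hseed, huniq, hone, hedge, hmax⟩ := hL
  obtain ⟨hadj, hlab, t₁, hinf, hlt, hle⟩ := hedge s w τ hwL hsw
  have hseed0 : (s, s, t₀) ∈ L := (hseed s t₀).mpr rfl
  have : t₁ = t₀ := huniq s t₁ t₀ hinf ⟨s, hseed0⟩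
  subst this
  exact ⟨hlab, hlt, hle⟩

open TemporalGraph in
/-- Any infection chain resulting from a single seed infection is contained in a
single δ-edge connected component: any two edges along which successful
infections occur lie in the same δ-edge connected component. -/
theorem chain_in_single_component {V : Type} (G : TemporalGraph V) (δ : ℕ)
    (s : V) (t₀ : ℕ) (L : Set (V × V × ℕ)) (hL : G.ConsistentLog δ {(s, t₀)} L)
    (v u v' u' : V) (t t' : ℕ)
    (h1 : (v, u, t) ∈ L) (hne1 : v ≠ u)
    (h2 : (v', u', t') ∈ L) (hne2 : v' ≠ u') :
    G.SameComponent δ (v, u) (v', u') := by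
  obtain ⟨w₁, τ₁, hs1, hL1, hc1⟩ := to_seed_edge G δ s t₀ L hL t v u h1 hne1
  obtain ⟨w₂, τ₂, hs2, hL2, hc2⟩ := to_seed_edge G δ s t₀ L hL t' v' u' h2 hne2
  obtain ⟨hlab1, hgt1, hle1⟩ := seed_edge_label G δ s t₀ L hL w₁ τ₁ hs1 hL1
  obtain ⟨hlab2, hgt2, hle2⟩ := seed_edge_label G δ s t₀ L hL w₂ τ₂ hs2 hL2
  have hadj1 : G.Adj s w₁ := ((hL.2.2.2.1) s w₁ τ₁ hL1 hs1).1
  have hadj2 : G.Adj s w₂ := ((hL.2.2.2.1) s w₂ τ₂ hL2 hs2).1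
  have hmid : G.EdgeRel δ (s, w₁) (s, w₂) := by
    refine ⟨hadj1, hadj2, by simp, ?_, ?_⟩ <;>
      simp only [hlab1, hlab2] <;> omega
  have hc2' : G.SameComponent δ (s, w₂) (v', u') :=
    (@Relation.ReflTransGen.symmetric _ _ ⟨edgeRel_symm G δ⟩).symm _ _ hc2
  exact hc1.trans (Relation.ReflTransGen.head hmid hc2')
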